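/- Let G be a group, x ∈ G, let A be the subgroup of G generated by x₁, …, x_m, and let P ∈ InvLO_x^A(G) ∩ Cof_x^A(G). Let w ∈ A have a word expression w = x_{i₁}^{j₁} x_{i₂}^{j₂} ⋯ x_{i_n}^{j_n} (each i_q ∈ {1,…,m}, j_q ∈ ℤ), and for p = 1,…,m set e_p = Σ_{q : i_q = p} j_q. If ρ_{x,P}^A(w^N) = 0 for all N ∈ ℤ, then |Σ_{p=1}^m e_p · ρ̄_{x,P}^A(x_p)| ≤ n. Moreover, if A is abelian, then Σ_{p=1}^m e_p · ρ̄_{x,P}^A(x_p) = 0. -/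

import Mathlib

open Filter Topology

/-- A subset `P ⊆ G` is the positive cone of a left ordering: `P·P ⊆ P` and
`G = P ⊔ P⁻¹ ⊔ {1}`. -/
def IsPosCone {G : Type*} [Group G] (P : Set G) : Prop :=
  (∀ a ∈ P, ∀ b ∈ P, a * b ∈ P) ∧
  (∀ g : G, g ∈ P ∨ g⁻¹ ∈ P ∨ g = 1) ∧
  (∀ g : G, g ∈ P → g⁻¹ ∉ P) ∧
  (1 : G) ∉ P

/-- The left-invariant order determined by a positive cone: `a <_P b` iff `a⁻¹ b ∈ P`. -/
def ltC {G : Type*} [Group G] (P : Set G) (a b : G) : Prop := a⁻¹ * b ∈ P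

/-- The non-strict order determined by a positive cone. -/
def leC {G : Type*} [Group G] (P : Set G) (a b : G) : Prop := ltC P a b ∨ a = b

/-- `P ∈ InvLO_x^H(G)`: right multiplication by `x` preserves `<_P` on the
subgroup generated by `H ∪ {x}`. -/
def InvOn {G : Type*} [Group G] (P : Set G) (H : Subgroup G) (x : G) : Prop :=
  ∀ b ∈ Subgroup.closure ((H : Set G) ∪ {x}),
  ∀ b' ∈ Subgroup.closure ((H : Set G) ∪ {x}),
  ltC P b b' → ltC P (b * x) (b' * x)

/-- `P ∈ Cof_x^H(G)`: `x` is cofinal to `H` with respect to `<_P`. -/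
def CofTo {G : Type*} [Group G] (P : Set G) (H : Subgroup G) (x : G) : Prop :=
  ∀ h ∈ H, ∃ N : ℕ, 1 ≤ N ∧ ltC P (x ^ (-(N : ℤ))) h ∧ ltC P h (x ^ (N : ℤ))

/-- `ρ` is the quasi morphism `ρ_{x,P}^H`: if `1 <_P x` then
`x^(ρ h) ≤_P h <_P x^(ρ h + 1)`, and if `x <_P 1` then `x^(-ρ h - 1) <_P h ≤_P x^(-ρ h)`,
for all `h ∈ H`. -/
def RhoChar {G : Type*} [Group G] (P : Set G) (H : Subgroup G) (x : G) (ρ : G → ℤ) : Prop :=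
  ∀ h ∈ H,
    (ltC P 1 x → leC P (x ^ ρ h) h ∧ ltC P h (x ^ (ρ h + 1))) ∧
    (ltC P x 1 → ltC P (x ^ (-(ρ h) - 1)) h ∧ leC P h (x ^ (-(ρ h))))

namespace ExpSumAux

variable {G : Type*} [Group G] {P : Set G} {x : G} {S A : Subgroup G}

lemma lt_trans' (hP : IsPosCone P) {a b c : G} (h1 : ltC P a b) (h2 : ltC P b c) : ltC P a c := by
  have := hP.1 _ h1 _ h2
  simpa [ltC, mul_assoc] using this

lemma lt_irrefl' (hP : IsPosCone P) (a : G) : ¬ ltC P a a := by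
  simp [ltC, hP.2.2.2]

lemma lt_asymm' (hP : IsPosCone P) {a b : G} (h1 : ltC P a b) (h2 : ltC P b a) : False :=
  lt_irrefl' hP a (lt_trans' hP h1 h2)

lemma lt_total' (hP : IsPosCone P) (a b : G) : ltC P a b ∨ ltC P b a ∨ a = b := by
  rcases hP.2.1 (a⁻¹ * b) with h | h | h
  · exact Or.inl h
  · right; left; simpa [ltC, mul_inv_rev] using h
  · right; right; exact inv_mul_eq_one.mp h

lemma lt_of_le_of_lt' (hP : IsPosCone P) {a b c : G} (h1 : leC P a b) (h2 : ltC P b c) :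
    ltC P a c := by
  rcases h1 with h1 | rfl
  · exact lt_trans' hP h1 h2
  · exact h2

lemma lt_of_lt_of_le' (hP : IsPosCone P) {a b c : G} (h1 : ltC P a b) (h2 : leC P b c) :
    ltC P a c := by
  rcases h2 with h2 | rfl
  · exact lt_trans' hP h1 h2
  · exact h1

lemma le_trans' (hP : IsPosCone P) {a b c : G} (h1 : leC P a b) (h2 : leC P b c) : leC P a c := by
  rcases h1 with h1 | rfl
  · exact Or.inl (lt_of_lt_of_le' hP h1 h2)
  · exact h2

lemma lt_mul_left' (hP : IsPosCone P) {a b : G} (c : G) (h : ltC P a b) : ltC P (c * a) (c * b) := by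
  simpa [ltC, mul_assoc] using h

lemma le_mul_left' (hP : IsPosCone P) {a b : G} (c : G) (h : leC P a b) : leC P (c * a) (c * b) := by
  rcases h with h | rfl
  · exact Or.inl (lt_mul_left' hP c h)
  · exact Or.inr rfl

lemma inv_right_iff (hP : IsPosCone P)
    (hinv : ∀ b ∈ S, ∀ b' ∈ S, ltC P b b' → ltC P (b * x) (b' * x))
    {b b' : G} (hb : b ∈ S) (hb' : b' ∈ S) : ltC P b b' ↔ ltC P (b * x) (b' * x) := by
  refine ⟨hinv b hb b' hb', fun h => ?_⟩
  rcases lt_total' hP b b' with h' | h' | rfl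
  · exact h'
  · exact (lt_asymm' hP h (hinv b' hb' b hb h')).elim
  · exact (lt_irrefl' hP _ h).elim

lemma inv_right_inv_iff (hP : IsPosCone P)
    (hinv : ∀ b ∈ S, ∀ b' ∈ S, ltC P b b' → ltC P (b * x) (b' * x)) (hxS : x ∈ S)
    {b b' : G} (hb : b ∈ S) (hb' : b' ∈ S) : ltC P b b' ↔ ltC P (b * x⁻¹) (b' * x⁻¹) := by
  have := inv_right_iff hP hinv (mul_mem hb (inv_mem hxS)) (mul_mem hb' (inv_mem hxS))
  simpa [mul_assoc] using this.symm

lemma inv_right_zpow (hP : IsPosCone P)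
    (hinv : ∀ b ∈ S, ∀ b' ∈ S, ltC P b b' → ltC P (b * x) (b' * x)) (hxS : x ∈ S)
    (k : ℤ) {b b' : G} (hb : b ∈ S) (hb' : b' ∈ S) :
    ltC P b b' ↔ ltC P (b * x ^ k) (b' * x ^ k) := by
  induction k using Int.induction_on with
  | zero => simp
  | succ k ih =>
      rw [zpow_add_one, ← mul_assoc, ← mul_assoc]
      exact ih.trans (inv_right_iff hP hinv (mul_mem hb (zpow_mem hxS k))
        (mul_mem hb' (zpow_mem hxS k)))
  | pred k ih =>
      rw [zpow_sub_one, ← mul_assoc, ← mul_assoc]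
      exact ih.trans (inv_right_inv_iff hP hinv hxS (mul_mem hb (zpow_mem hxS _))
        (mul_mem hb' (zpow_mem hxS _)))

lemma le_mul_right_zpow (hP : IsPosCone P)
    (hinv : ∀ b ∈ S, ∀ b' ∈ S, ltC P b b' → ltC P (b * x) (b' * x)) (hxS : x ∈ S)
    (k : ℤ) {b b' : G} (hb : b ∈ S) (hb' : b' ∈ S) (h : leC P b b') :
    leC P (b * x ^ k) (b' * x ^ k) := by
  rcases h with h | rfl
  · exact Or.inl ((inv_right_zpow hP hinv hxS k hb hb').mp h)
  · exact Or.inr rfl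

lemma xpow_nat_mem (hP : IsPosCone P) (hx : x ∈ P) : ∀ n : ℕ, x ^ (n + 1) ∈ P := by
  intro n
  induction n with
  | zero => simpa using hx
  | succ n ih => rw [pow_succ]; exact hP.1 _ ih _ hx

lemma xzpow_mem (hP : IsPosCone P) (hx : x ∈ P) {d : ℤ} (hd : 1 ≤ d) : x ^ d ∈ P := by
  obtain ⟨n, rfl⟩ : ∃ n : ℕ, d = (n : ℤ) + 1 := ⟨(d - 1).toNat, by omega⟩
  rw [show (n : ℤ) + 1 = ((n + 1 : ℕ) : ℤ) by push_cast; ring, zpow_natCast]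
  exact xpow_nat_mem hP hx n

lemma xzpow_mem_iff (hP : IsPosCone P) (hx : x ∈ P) (d : ℤ) : x ^ d ∈ P ↔ 1 ≤ d := by
  refine ⟨fun h => ?_, fun h => xzpow_mem hP hx h⟩
  by_contra hd
  push_neg at hd
  have hd0 : d ≤ 0 := by omega
  rcases hd0.eq_or_lt with rfl | hneg
  · exact hP.2.2.2 (by simpa using h)
  · have h2 : x ^ (-d) ∈ P := xzpow_mem hP hx (by omega)
    have h3 : (x ^ (-d))⁻¹ ∈ P := by simpa [zpow_neg] using h
    exact hP.2.2.1 _ h2 h3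

lemma xzpow_lt_iff (hP : IsPosCone P) (hx : x ∈ P) (k l : ℤ) :
    ltC P (x ^ k) (x ^ l) ↔ k < l := by
  unfold ltC
  rw [← zpow_neg, ← zpow_add, xzpow_mem_iff hP hx]
  omega

variable (ρ : G → ℤ)

lemma rho_defect (hP : IsPosCone P) (hx : x ∈ P)
    (hinv : ∀ b ∈ S, ∀ b' ∈ S, ltC P b b' → ltC P (b * x) (b' * x)) (hxS : x ∈ S)
    (hAS : ∀ g ∈ A, g ∈ S)
    (hchar : ∀ h ∈ A, leC P (x ^ ρ h) h ∧ ltC P h (x ^ (ρ h + 1)))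
    {a b : G} (ha : a ∈ A) (hb : b ∈ A) :
    ρ a + ρ b ≤ ρ (a * b) ∧ ρ (a * b) ≤ ρ a + ρ b + 1 := by
  obtain ⟨a1, a2⟩ := hchar a ha
  obtain ⟨b1, b2⟩ := hchar b hb
  obtain ⟨m1, m2⟩ := hchar (a * b) (mul_mem ha hb)
  have l1 : leC P (x ^ ρ a * x ^ ρ b) (a * x ^ ρ b) :=
    le_mul_right_zpow hP hinv hxS (ρ b) (zpow_mem hxS _) (hAS a ha) a1
  have l2 : leC P (a * x ^ ρ b) (a * b) := le_mul_left' hP a b1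
  have low : leC P (x ^ (ρ a + ρ b)) (a * b) := by
    rw [zpow_add]; exact le_trans' hP l1 l2
  have u1 : ltC P (a * b) (a * x ^ (ρ b + 1)) := lt_mul_left' hP a b2
  have u2 : ltC P (a * x ^ (ρ b + 1)) (x ^ (ρ a + 1) * x ^ (ρ b + 1)) :=
    (inv_right_zpow hP hinv hxS (ρ b + 1) (hAS a ha) (zpow_mem hxS _)).mp a2
  have up : ltC P (a * b) (x ^ (ρ a + ρ b + 2)) := by
    have h := lt_trans' hP u1 u2
    rw [← zpow_add, show ρ a + 1 + (ρ b + 1) = ρ a + ρ b + 2 by ring] at h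
    exact h
  have c1 : ltC P (x ^ ρ (a * b)) (x ^ (ρ a + ρ b + 2)) := lt_of_le_of_lt' hP m1 up
  have c2 : ltC P (x ^ (ρ a + ρ b)) (x ^ (ρ (a * b) + 1)) := lt_of_le_of_lt' hP low m2
  rw [xzpow_lt_iff hP hx] at c1 c2
  omega

lemma rho_one (hP : IsPosCone P) (hx : x ∈ P)
    (hchar : ∀ h ∈ A, leC P (x ^ ρ h) h ∧ ltC P h (x ^ (ρ h + 1))) : ρ 1 = 0 := by
  obtain ⟨c1, c2⟩ := hchar 1 (one_mem A)
  have h1 : ltC P (x ^ ρ (1 : G)) (x ^ (1 : ℤ)) := by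
    refine lt_of_le_of_lt' hP c1 ?_
    simpa [ltC] using hx
  have h2 : ltC P (x ^ (0 : ℤ)) (x ^ (ρ (1 : G) + 1)) := by simpa using c2
  rw [xzpow_lt_iff hP hx] at h1 h2
  omega

lemma rho_pow_bounds (hP : IsPosCone P) (hx : x ∈ P)
    (hinv : ∀ b ∈ S, ∀ b' ∈ S, ltC P b b' → ltC P (b * x) (b' * x)) (hxS : x ∈ S)
    (hAS : ∀ g ∈ A, g ∈ S)
    (hchar : ∀ h ∈ A, leC P (x ^ ρ h) h ∧ ltC P h (x ^ (ρ h + 1)))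
    {a : G} (ha : a ∈ A) :
    ∀ N : ℕ, (N : ℤ) * ρ a ≤ ρ (a ^ N) ∧ ρ (a ^ N) ≤ (N : ℤ) * ρ a + N := by
  intro N
  induction N with
  | zero => simp [rho_one ρ hP hx hchar]
  | succ N ih =>
      have hd := rho_defect ρ hP hx hinv hxS hAS hchar (pow_mem ha N) ha
      rw [pow_succ]
      push_cast
      constructor <;> nlinarith [ih.1, ih.2, hd.1, hd.2]

lemma rho_list (hP : IsPosCone P) (hx : x ∈ P)
    (hinv : ∀ b ∈ S, ∀ b' ∈ S, ltC P b b' → ltC P (b * x) (b' * x)) (hxS : x ∈ S)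
    (hAS : ∀ g ∈ A, g ∈ S)
    (hchar : ∀ h ∈ A, leC P (x ^ ρ h) h ∧ ltC P h (x ^ (ρ h + 1))) :
    ∀ L : List G, (∀ g ∈ L, g ∈ A) →
      (L.map ρ).sum ≤ ρ L.prod ∧ ρ L.prod ≤ (L.map ρ).sum + L.length := by
  intro L
  induction L with
  | nil => intro _; simp [rho_one ρ hP hx hchar]
  | cons a L ih =>
      intro hmem
      have ha : a ∈ A := hmem a List.mem_cons_self
      have hL : ∀ g ∈ L, g ∈ A := fun g hg => hmem g (List.mem_cons_of_mem a hg)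
      have hprod : L.prod ∈ A := list_prod_mem hL
      have hd := rho_defect ρ hP hx hinv hxS hAS hchar ha hprod
      have hih := ih hL
      simp only [List.prod_cons, List.map_cons, List.sum_cons, List.length_cons]
      push_cast
      omega
lemma abs_int_div_le {z : ℤ} (hz1 : -1 ≤ z) (hz2 : z ≤ 1) (N : ℕ) (hN : 1 ≤ N) :
    |(z : ℝ) / N| ≤ 1 / N := by
  have hN' : (0 : ℝ) < N := by exact_mod_cast hN
  rw [abs_div, abs_of_pos hN']
  gcongr
  rw [abs_le]
  exact ⟨by exact_mod_cast hz1, by exact_mod_cast hz2⟩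

lemma tendsto_helper {u v : ℕ → ℝ} {L : ℝ} (h : ∀ N : ℕ, 1 ≤ N → |u N - v N| ≤ 1 / N)
    (hv : Tendsto v atTop (𝓝 L)) : Tendsto u atTop (𝓝 L) := by
  have h0 : Tendsto (fun N => u N - v N) atTop (𝓝 0) := by
    apply squeeze_zero_norm'
    · exact eventually_atTop.2 ⟨1, fun N hN => h N hN⟩
    · exact tendsto_one_div_atTop_nhds_zero_nat
  have := h0.add hv
  simpa using this

variable (ρbar : G → ℝ)

lemma rhobar_ge (hP : IsPosCone P) (hx : x ∈ P)
    (hinv : ∀ b ∈ S, ∀ b' ∈ S, ltC P b b' → ltC P (b * x) (b' * x)) (hxS : x ∈ S)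
    (hAS : ∀ g ∈ A, g ∈ S)
    (hchar : ∀ h ∈ A, leC P (x ^ ρ h) h ∧ ltC P h (x ^ (ρ h + 1)))
    (hρbar : ∀ a ∈ A, Tendsto (fun N : ℕ => (ρ (a ^ N) : ℝ) / N) atTop (𝓝 (ρbar a)))
    {a : G} (ha : a ∈ A) : (ρ a : ℝ) ≤ ρbar a := by
  refine ge_of_tendsto (hρbar a ha) ?_
  filter_upwards [eventually_gt_atTop 0] with N hN
  have hb := (rho_pow_bounds ρ hP hx hinv hxS hAS hchar ha N).1
  have hN' : (0 : ℝ) < N := by exact_mod_cast hN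
  rw [le_div_iff₀ hN']
  have h2 : ((N : ℤ) * ρ a : ℝ) ≤ ((ρ (a ^ N) : ℤ) : ℝ) := by exact_mod_cast hb
  push_cast at h2 ⊢
  linarith

lemma rhobar_le (hP : IsPosCone P) (hx : x ∈ P)
    (hinv : ∀ b ∈ S, ∀ b' ∈ S, ltC P b b' → ltC P (b * x) (b' * x)) (hxS : x ∈ S)
    (hAS : ∀ g ∈ A, g ∈ S)
    (hchar : ∀ h ∈ A, leC P (x ^ ρ h) h ∧ ltC P h (x ^ (ρ h + 1)))
    (hρbar : ∀ a ∈ A, Tendsto (fun N : ℕ => (ρ (a ^ N) : ℝ) / N) atTop (𝓝 (ρbar a)))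
    {a : G} (ha : a ∈ A) : ρbar a ≤ (ρ a : ℝ) + 1 := by
  refine le_of_tendsto (hρbar a ha) ?_
  filter_upwards [eventually_gt_atTop 0] with N hN
  have hb := (rho_pow_bounds ρ hP hx hinv hxS hAS hchar ha N).2
  have hN' : (0 : ℝ) < N := by exact_mod_cast hN
  rw [div_le_iff₀ hN']
  have h2 : ((ρ (a ^ N) : ℤ) : ℝ) ≤ ((N : ℤ) * ρ a + N : ℝ) := by exact_mod_cast hb
  push_cast at h2 ⊢
  nlinarith

lemma rhobar_one (hP : IsPosCone P) (hx : x ∈ P)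
    (hchar : ∀ h ∈ A, leC P (x ^ ρ h) h ∧ ltC P h (x ^ (ρ h + 1)))
    (hρbar : ∀ a ∈ A, Tendsto (fun N : ℕ => (ρ (a ^ N) : ℝ) / N) atTop (𝓝 (ρbar a))) :
    ρbar (1 : G) = 0 := by
  refine tendsto_nhds_unique (hρbar 1 (one_mem A)) ?_
  have : (fun N : ℕ => (ρ ((1 : G) ^ N) : ℝ) / N) = fun _ : ℕ => (0 : ℝ) := by
    funext N
    simp [rho_one (A := A) ρ hP hx hchar]
  rw [this]
  exact tendsto_const_nhds

lemma rhobar_inv (hP : IsPosCone P) (hx : x ∈ P)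
    (hinv : ∀ b ∈ S, ∀ b' ∈ S, ltC P b b' → ltC P (b * x) (b' * x)) (hxS : x ∈ S)
    (hAS : ∀ g ∈ A, g ∈ S)
    (hchar : ∀ h ∈ A, leC P (x ^ ρ h) h ∧ ltC P h (x ^ (ρ h + 1)))
    (hρbar : ∀ a ∈ A, Tendsto (fun N : ℕ => (ρ (a ^ N) : ℝ) / N) atTop (𝓝 (ρbar a)))
    {a : G} (ha : a ∈ A) : ρbar a⁻¹ = -ρbar a := by
  refine tendsto_nhds_unique (hρbar a⁻¹ (inv_mem ha)) ?_
  refine tendsto_helper (fun N hN => ?_) (hρbar a ha).neg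
  have hd := rho_defect ρ hP hx hinv hxS hAS hchar (pow_mem ha N) (pow_mem (inv_mem ha) N)
  have he : a ^ N * a⁻¹ ^ N = 1 := by simp [inv_pow]
  rw [he, rho_one (A := A) ρ hP hx hchar] at hd
  have heq : (ρ (a⁻¹ ^ N) : ℝ) / N - -((ρ (a ^ N) : ℝ) / N)
      = ((ρ (a ^ N) + ρ (a⁻¹ ^ N) : ℤ) : ℝ) / N := by push_cast; ring
  rw [heq]
  exact abs_int_div_le (by omega) (by omega) N hN

lemma rhobar_pow (hP : IsPosCone P) (hx : x ∈ P)
    (hinv : ∀ b ∈ S, ∀ b' ∈ S, ltC P b b' → ltC P (b * x) (b' * x)) (hxS : x ∈ S)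
    (hAS : ∀ g ∈ A, g ∈ S)
    (hchar : ∀ h ∈ A, leC P (x ^ ρ h) h ∧ ltC P h (x ^ (ρ h + 1)))
    (hρbar : ∀ a ∈ A, Tendsto (fun N : ℕ => (ρ (a ^ N) : ℝ) / N) atTop (𝓝 (ρbar a)))
    {a : G} (ha : a ∈ A) (c : ℕ) : ρbar (a ^ c) = c * ρbar a := by
  rcases Nat.eq_zero_or_pos c with rfl | hc
  · simpa using rhobar_one (A := A) ρ ρbar hP hx hchar hρbar
  · refine tendsto_nhds_unique (hρbar (a ^ c) (pow_mem ha c)) ?_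
    have h1 : Tendsto (fun N : ℕ => c * N) atTop atTop :=
      tendsto_atTop_mono (fun N => Nat.le_mul_of_pos_left N hc) tendsto_id
    have h2 := (hρbar a ha).comp h1
    have h3 := h2.const_mul (c : ℝ)
    refine Tendsto.congr (fun N => ?_) h3
    simp only [Function.comp_apply]
    rw [← pow_mul]
    have hc0 : ((c : ℝ)) ≠ 0 := Nat.cast_ne_zero.mpr hc.ne'
    push_cast
    rw [mul_div_assoc', mul_div_mul_left _ _ hc0]

lemma rhobar_zpow (hP : IsPosCone P) (hx : x ∈ P)
    (hinv : ∀ b ∈ S, ∀ b' ∈ S, ltC P b b' → ltC P (b * x) (b' * x)) (hxS : x ∈ S)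
    (hAS : ∀ g ∈ A, g ∈ S)
    (hchar : ∀ h ∈ A, leC P (x ^ ρ h) h ∧ ltC P h (x ^ (ρ h + 1)))
    (hρbar : ∀ a ∈ A, Tendsto (fun N : ℕ => (ρ (a ^ N) : ℝ) / N) atTop (𝓝 (ρbar a)))
    {a : G} (ha : a ∈ A) (k : ℤ) : ρbar (a ^ k) = (k : ℝ) * ρbar a := by
  cases k with
  | ofNat c =>
      rw [Int.ofNat_eq_coe, zpow_natCast,
        rhobar_pow ρ ρbar hP hx hinv hxS hAS hchar hρbar ha c]
      push_cast; ring
  | negSucc c =>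
      rw [zpow_negSucc, rhobar_inv ρ ρbar hP hx hinv hxS hAS hchar hρbar (pow_mem ha (c + 1)),
        rhobar_pow ρ ρbar hP hx hinv hxS hAS hchar hρbar ha (c + 1)]
      push_cast; ring

lemma rhobar_add (hP : IsPosCone P) (hx : x ∈ P)
    (hinv : ∀ b ∈ S, ∀ b' ∈ S, ltC P b b' → ltC P (b * x) (b' * x)) (hxS : x ∈ S)
    (hAS : ∀ g ∈ A, g ∈ S)
    (hchar : ∀ h ∈ A, leC P (x ^ ρ h) h ∧ ltC P h (x ^ (ρ h + 1)))
    (hρbar : ∀ a ∈ A, Tendsto (fun N : ℕ => (ρ (a ^ N) : ℝ) / N) atTop (𝓝 (ρbar a)))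
    {a b : G} (hcomm : a * b = b * a) (ha : a ∈ A) (hb : b ∈ A) :
    ρbar (a * b) = ρbar a + ρbar b := by
  refine tendsto_nhds_unique (hρbar (a * b) (mul_mem ha hb))
    (tendsto_helper (fun N hN => ?_) ((hρbar a ha).add (hρbar b hb)))
  have hmp : (a * b) ^ N = a ^ N * b ^ N := (Commute.mul_pow hcomm N)
  have hd := rho_defect ρ hP hx hinv hxS hAS hchar (pow_mem ha N) (pow_mem hb N)
  rw [hmp]
  have heq : (ρ (a ^ N * b ^ N) : ℝ) / N - ((ρ (a ^ N) : ℝ) / N + (ρ (b ^ N) : ℝ) / N)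
      = ((ρ (a ^ N * b ^ N) - ρ (a ^ N) - ρ (b ^ N) : ℤ) : ℝ) / N := by push_cast; ring
  rw [heq]
  exact abs_int_div_le (by omega) (by omega) N hN

lemma rhobar_list (hP : IsPosCone P) (hx : x ∈ P)
    (hinv : ∀ b ∈ S, ∀ b' ∈ S, ltC P b b' → ltC P (b * x) (b' * x)) (hxS : x ∈ S)
    (hAS : ∀ g ∈ A, g ∈ S)
    (hchar : ∀ h ∈ A, leC P (x ^ ρ h) h ∧ ltC P h (x ^ (ρ h + 1)))
    (hρbar : ∀ a ∈ A, Tendsto (fun N : ℕ => (ρ (a ^ N) : ℝ) / N) atTop (𝓝 (ρbar a)))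
    (hcomm : ∀ a ∈ A, ∀ b ∈ A, a * b = b * a) :
    ∀ L : List G, (∀ g ∈ L, g ∈ A) → ρbar L.prod = (L.map ρbar).sum := by
  intro L
  induction L with
  | nil => intro _; simpa using rhobar_one (A := A) ρ ρbar hP hx hchar hρbar
  | cons a L ih =>
      intro hmem
      have ha : a ∈ A := hmem a List.mem_cons_self
      have hL : ∀ g ∈ L, g ∈ A := fun g hg => hmem g (List.mem_cons_of_mem a hg)
      have hprod : L.prod ∈ A := list_prod_mem hL
      simp only [List.prod_cons, List.map_cons, List.sum_cons]
      rw [rhobar_add ρ ρbar hP hx hinv hxS hAS hchar hρbar (hcomm a ha L.prod hprod) ha hprod,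
        ih hL]
end ExpSumAux


/-- let `A` be the subgroup generated by `x₁, …, x_m`, let
`w = x_{i₁}^{j₁} ⋯ x_{i_n}^{j_n} ∈ A` with exponent sums `e_p = Σ_{q : i_q = p} j_q`.
If `ρ_{x,P}^A(w^N) = 0` for all `N ∈ ℤ`, then `|Σ_p e_p ρ̄(x_p)| ≤ n`; and if `A` is
abelian then `Σ_p e_p ρ̄(x_p) = 0`. -/
theorem exponent_sum_bound_of_rho_vanishing {G : Type*} [Group G] (x : G)
    (m : ℕ) (xs : Fin m → G) (P : Set G) (hP : IsPosCone P)
    (hinv : InvOn P (Subgroup.closure (Set.range xs)) x)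
    (hcof : CofTo P (Subgroup.closure (Set.range xs)) x)
    (ρ : G → ℤ) (hρ : RhoChar P (Subgroup.closure (Set.range xs)) x ρ)
    (ρbar : G → ℝ)
    (hρbar : ∀ a ∈ Subgroup.closure (Set.range xs),
      Tendsto (fun N : ℕ => (ρ (a ^ N) : ℝ) / N) atTop (𝓝 (ρbar a)))
    (n : ℕ) (i : Fin n → Fin m) (j : Fin n → ℤ) (w : G)
    (hw : w = (List.ofFn fun q => xs (i q) ^ j q).prod)
    (e : Fin m → ℤ) (he : ∀ p, e p = ∑ q : Fin n, if i q = p then j q else 0)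
    (h0 : ∀ N : ℤ, ρ (w ^ N) = 0) :
    |∑ p : Fin m, (e p : ℝ) * ρbar (xs p)| ≤ (n : ℝ) ∧
      ((∀ a ∈ Subgroup.closure (Set.range xs), ∀ b ∈ Subgroup.closure (Set.range xs),
          a * b = b * a) →
        ∑ p : Fin m, (e p : ℝ) * ρbar (xs p) = 0) := by
  classical
  rcases hP.2.1 x with hx | hx' | hxone
  · -- main case : 1 <_P x
    have hx1 : ltC P 1 x := by simpa [ltC] using hx
    set A := Subgroup.closure (Set.range xs) with hAdef
    set S := Subgroup.closure ((A : Set G) ∪ {x}) with hSdef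
    have hxS : x ∈ S := Subgroup.subset_closure (Set.mem_union_right _ rfl)
    have hAS : ∀ g ∈ A, g ∈ S := fun g hg => Subgroup.subset_closure (Set.mem_union_left _ hg)
    have hchar : ∀ h ∈ A, leC P (x ^ ρ h) h ∧ ltC P h (x ^ (ρ h + 1)) :=
      fun h hh => (hρ h hh).1 hx1
    have hinv' : ∀ b ∈ S, ∀ b' ∈ S, ltC P b b' → ltC P (b * x) (b' * x) :=
      fun b hb b' hb' => hinv b hb b' hb'
    have hxsA : ∀ p, xs p ∈ A := fun p => Subgroup.subset_closure ⟨p, rfl⟩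
    set f : Fin n → G := fun q => xs (i q) ^ j q with hf
    have hfA : ∀ q, f q ∈ A := fun q => zpow_mem (hxsA (i q)) _
    have hLA : ∀ g ∈ List.ofFn f, g ∈ A := by
      intro g hg
      rw [List.mem_ofFn] at hg
      obtain ⟨q, rfl⟩ := hg
      exact hfA q
    have hwA : w ∈ A := by rw [hw]; exact list_prod_mem hLA
    have hρw : ρ w = 0 := by simpa using h0 1
    have hlist := ExpSumAux.rho_list ρ hP hx hinv' hxS hAS hchar (List.ofFn f) hLA
    rw [← hw, hρw, List.length_ofFn] at hlist
    have hmapsum : ((List.ofFn f).map ρ).sum = ∑ q : Fin n, ρ (f q) := by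
      rw [List.map_ofFn, List.sum_ofFn]; simp [Function.comp]
    rw [hmapsum] at hlist
    have hSZ1 : ∑ q : Fin n, ρ (f q) ≤ 0 := hlist.1
    have hSZ2 : -(n : ℤ) ≤ ∑ q : Fin n, ρ (f q) := by
      have := hlist.2; omega
    have hub : ∀ q : Fin n, ρbar (f q) ≤ (ρ (f q) : ℝ) + 1 :=
      fun q => ExpSumAux.rhobar_le ρ ρbar hP hx hinv' hxS hAS hchar hρbar (hfA q)
    have hlb : ∀ q : Fin n, (ρ (f q) : ℝ) ≤ ρbar (f q) :=
      fun q => ExpSumAux.rhobar_ge ρ ρbar hP hx hinv' hxS hAS hchar hρbar (hfA q)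
    have E1 : ∑ p : Fin m, (e p : ℝ) * ρbar (xs p) = ∑ q : Fin n, ρbar (f q) := by
      have hzp : ∀ q : Fin n, ρbar (f q) = (j q : ℝ) * ρbar (xs (i q)) :=
        fun q => ExpSumAux.rhobar_zpow ρ ρbar hP hx hinv' hxS hAS hchar hρbar (hxsA (i q)) (j q)
      calc ∑ p : Fin m, (e p : ℝ) * ρbar (xs p)
          = ∑ p : Fin m, ∑ q : Fin n, (if i q = p then (j q : ℝ) * ρbar (xs p) else 0) := by
            refine Finset.sum_congr rfl fun p _ => ?_
            rw [he p, Int.cast_sum, Finset.sum_mul]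
            refine Finset.sum_congr rfl fun q _ => ?_
            split <;> simp
        _ = ∑ q : Fin n, ∑ p : Fin m, (if i q = p then (j q : ℝ) * ρbar (xs p) else 0) :=
            Finset.sum_comm
        _ = ∑ q : Fin n, (j q : ℝ) * ρbar (xs (i q)) := by
            refine Finset.sum_congr rfl fun q _ => ?_
            simp
        _ = ∑ q : Fin n, ρbar (f q) := by
            refine Finset.sum_congr rfl fun q _ => (hzp q).symm
    have hcastsum : ((∑ q : Fin n, ρ (f q) : ℤ) : ℝ) = ∑ q : Fin n, (ρ (f q) : ℝ) := by
      push_cast; rfl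
    have hsum_ub : ∑ q : Fin n, ρbar (f q) ≤ (n : ℝ) := by
      have h1 : ∑ q : Fin n, ρbar (f q) ≤ ∑ q : Fin n, ((ρ (f q) : ℝ) + 1) :=
        Finset.sum_le_sum fun q _ => hub q
      have h2 : ∑ q : Fin n, ((ρ (f q) : ℝ) + 1) = (∑ q : Fin n, (ρ (f q) : ℝ)) + n := by
        rw [Finset.sum_add_distrib]; simp
      have h3 : ((∑ q : Fin n, ρ (f q) : ℤ) : ℝ) ≤ 0 := by exact_mod_cast hSZ1
      rw [hcastsum] at h3
      linarith
    have hsum_lb : -(n : ℝ) ≤ ∑ q : Fin n, ρbar (f q) := by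
      have h1 : ∑ q : Fin n, (ρ (f q) : ℝ) ≤ ∑ q : Fin n, ρbar (f q) :=
        Finset.sum_le_sum fun q _ => hlb q
      have h3 : (-(n : ℤ) : ℝ) ≤ ((∑ q : Fin n, ρ (f q) : ℤ) : ℝ) := by exact_mod_cast hSZ2
      rw [hcastsum] at h3
      push_cast at h3
      linarith
    constructor
    · rw [E1]
      exact abs_le.mpr ⟨hsum_lb, hsum_ub⟩
    · intro hab
      have hlistbar := ExpSumAux.rhobar_list ρ ρbar hP hx hinv' hxS hAS hchar hρbar hab
        (List.ofFn f) hLA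
      have hwbar : ρbar w = 0 := by
        refine tendsto_nhds_unique (hρbar w hwA) ?_
        have heq : (fun N : ℕ => (ρ (w ^ N) : ℝ) / N) = fun _ : ℕ => (0 : ℝ) := by
          funext N
          rw [show w ^ N = w ^ ((N : ℤ)) from (zpow_natCast w N).symm, h0]
          simp
        rw [heq]
        exact tendsto_const_nhds
      have hfin : ∑ q : Fin n, ρbar (f q) = ρbar w := by
        rw [hw, hlistbar, List.map_ofFn, List.sum_ofFn]; simp [Function.comp]
      rw [E1, hfin, hwbar]
  · -- case x <_P 1 : contradiction with RhoChar at h = 1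
    exfalso
    have hlt : ltC P x 1 := by simpa [ltC] using hx'
    obtain ⟨c1, c2⟩ := (hρ 1 (one_mem _)).2 hlt
    have key : ∀ k : ℤ, x ^ k ∈ P ↔ 1 ≤ -k := by
      intro k
      have h := ExpSumAux.xzpow_mem_iff hP hx' (-k)
      rw [show (x⁻¹) ^ (-k) = x ^ k by group] at h
      exact h
    have hm1 : x ^ (ρ (1 : G) + 1) ∈ P := by
      have h := c1
      unfold ltC at h
      rw [mul_one, ← zpow_neg, show -(-(ρ (1 : G)) - 1) = ρ (1 : G) + 1 by ring] at h
      exact h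
    have hρ1 : ρ (1 : G) ≤ -2 := by
      have := (key _).mp hm1; omega
    rcases c2 with hlt2 | heq
    · have h2 : x ^ (-(ρ (1 : G))) ∈ P := by
        have := hlt2
        unfold ltC at this
        simpa using this
      have := (key _).mp h2
      omega
    · have h4 : x ^ (-(ρ (1 : G))) = 1 := heq.symm
      have h5 : x ^ (ρ (1 : G)) = 1 := by
        rw [← inv_inv (x ^ ρ (1 : G)), ← zpow_neg, h4, inv_one]
      have h6 : x ^ (ρ (1 : G) + 1) = x := by
        rw [zpow_add, h5, one_mul, zpow_one]
      rw [h6] at hm1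
      exact hP.2.2.1 x hm1 hx'
  · -- case x = 1 : contradiction with cofinality
    exfalso
    obtain ⟨N, hN1, _, h3⟩ := hcof 1 (one_mem _)
    rw [hxone] at h3
    simp [ltC] at h3
    exact hP.2.2.2 h3
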